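/- Let A₁,…,A_k be D×D integer matrices. For i ∈ {1,…,k} define the (D²+1)×(D²+1) block matrix B_i = fromBlocks (A_i ⊗ A_i) 0 0 1, where A_i ⊗ A_i is the Kronecker product and the lower-right block is the 1×1 matrix (1); define B_{k+1} = fromBlocks E₁₁ 0 0 (−1), where E₁₁ is the D²×D² matrix with a single 1 in the upper-left corner. Then for every index sequence i₁,…,i_n ∈ {1,…,k}: tr(B_{i₁}·B_{i₂}⋯B_{i_n}·B_{k+1}) = ((A_{i₁}·A_{i₂}⋯A_{i_n})_{1,1})² − 1, and tr(B_{i₁}·B_{i₂}⋯B_{i_n}) = (tr(A_{i₁}⋯A_{i_n}))² + 1. -/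

import Mathlib

/-- The block matrix `Bᵢ = fromBlocks (Aᵢ ⊗ Aᵢ) 0 0 1`. -/
def blockB {D : ℕ} (A : Matrix (Fin D) (Fin D) ℤ) :
    Matrix ((Fin D × Fin D) ⊕ Unit) ((Fin D × Fin D) ⊕ Unit) ℤ :=
  Matrix.fromBlocks (Matrix.kroneckerMap (· * ·) A A) 0 0 1

/-- The block matrix `B_{k+1} = fromBlocks E₁₁ 0 0 (-1)`, where `E₁₁` has a single
`1` in the upper-left corner. -/
def blockLast {D : ℕ} (hD : 0 < D) :
    Matrix ((Fin D × Fin D) ⊕ Unit) ((Fin D × Fin D) ⊕ Unit) ℤ :=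
  Matrix.fromBlocks
    (Matrix.single ((⟨0, hD⟩ : Fin D), (⟨0, hD⟩ : Fin D))
      ((⟨0, hD⟩ : Fin D), (⟨0, hD⟩ : Fin D)) 1) 0 0 (-1)

open Matrix Kronecker in
lemma blockB_mul {D : ℕ} (M N : Matrix (Fin D) (Fin D) ℤ) :
    blockB M * blockB N = blockB (M * N) := by
  simp only [blockB, Matrix.fromBlocks_multiply, Matrix.mul_zero, Matrix.zero_mul,
    add_zero, zero_add, mul_one, Matrix.mul_one,
    (Matrix.mul_kronecker_mul M N M N).symm]

lemma blockB_one {D : ℕ} : blockB (1 : Matrix (Fin D) (Fin D) ℤ) = 1 := by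
  have : Matrix.kroneckerMap (· * ·) (1 : Matrix (Fin D) (Fin D) ℤ) 1 = 1 :=
    Matrix.one_kronecker_one (α := ℤ) (m := Fin D) (n := Fin D)
  simp [blockB, this, Matrix.fromBlocks_one]

lemma blockB_prod {D : ℕ} (l : List (Matrix (Fin D) (Fin D) ℤ)) :
    (l.map blockB).prod = blockB l.prod := by
  induction l with
  | nil => simp [blockB_one]
  | cons a t ih => simp [ih, blockB_mul]

lemma trace_mul_std {n : Type*} [Fintype n] [DecidableEq n]
    (M : Matrix n n ℤ) (i : n) :
    Matrix.trace (M * Matrix.single i i 1) = M i i := by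
  simp [Matrix.trace, Matrix.mul_apply, Matrix.single, Matrix.diag,
    ite_and, Finset.sum_ite_eq, Finset.sum_ite_eq', eq_comm]

theorem block_traces {D k : ℕ} (hD : 0 < D) (A : Fin k → Matrix (Fin D) (Fin D) ℤ)
    (n : ℕ) (idx : Fin n → Fin k) :
    Matrix.trace ((List.ofFn fun j => blockB (A (idx j))).prod * blockLast hD) =
      ((List.ofFn fun j => A (idx j)).prod ⟨0, hD⟩ ⟨0, hD⟩) ^ 2 - 1 ∧
    Matrix.trace ((List.ofFn fun j => blockB (A (idx j))).prod) =
      (Matrix.trace ((List.ofFn fun j => A (idx j)).prod)) ^ 2 + 1 := by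
  have hprod : (List.ofFn fun j => blockB (A (idx j))).prod
      = blockB (List.ofFn fun j => A (idx j)).prod := by
    rw [← blockB_prod, List.map_ofFn]
    rfl
  set P := (List.ofFn fun j => A (idx j)).prod with hP
  constructor
  · rw [hprod]
    have : blockB P * blockLast hD =
        Matrix.fromBlocks
          (Matrix.kroneckerMap (· * ·) P P *
            Matrix.single ((⟨0, hD⟩ : Fin D), (⟨0, hD⟩ : Fin D))
              ((⟨0, hD⟩ : Fin D), (⟨0, hD⟩ : Fin D)) 1) 0 0 (-1) := by
      simp [blockB, blockLast, Matrix.fromBlocks_multiply]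
    rw [this]
    have ht : Matrix.trace (Matrix.fromBlocks
        (Matrix.kroneckerMap (· * ·) P P *
          Matrix.single ((⟨0, hD⟩ : Fin D), (⟨0, hD⟩ : Fin D))
            ((⟨0, hD⟩ : Fin D), (⟨0, hD⟩ : Fin D)) 1) 0 0 (-1 : Matrix Unit Unit ℤ)) =
        Matrix.trace (Matrix.kroneckerMap (· * ·) P P *
          Matrix.single ((⟨0, hD⟩ : Fin D), (⟨0, hD⟩ : Fin D))
            ((⟨0, hD⟩ : Fin D), (⟨0, hD⟩ : Fin D)) 1) + Matrix.trace (-1 : Matrix Unit Unit ℤ) := by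
      simp [Matrix.trace, Matrix.fromBlocks, Fintype.sum_sum_type]
    rw [ht, trace_mul_std]
    simp [Matrix.kroneckerMap, sq, sub_eq_add_neg, Matrix.trace]
  · rw [hprod, blockB]
    have ht : Matrix.trace (Matrix.fromBlocks (Matrix.kroneckerMap (· * ·) P P) 0 0
        (1 : Matrix Unit Unit ℤ)) =
        Matrix.trace (Matrix.kroneckerMap (· * ·) P P) + Matrix.trace (1 : Matrix Unit Unit ℤ) := by
      simp [Matrix.trace, Matrix.fromBlocks, Fintype.sum_sum_type]
    rw [ht, Matrix.trace_kronecker P P]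
    simp [sq, Matrix.trace]
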